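/- For every natural number k ≥ 1, there exist at least k distinct primitive Pythagorean triples (x, y, ℓ) with positive entries satisfying x, y, ℓ ≤ (2π²/3)·k; in particular, there exist k distinct primitive triples all of whose entries are at most 7k. -/

import Mathlib

open Finset

namespace PTLB

def pc (t : ℕ) : ℕ := 2 * (t / 2) * ((t + 1) / 2)

lemma pc_le (t : ℕ) : 2 * pc t ≤ t * t := by
  rcases Nat.even_or_odd t with ⟨u, rfl⟩ | ⟨u, rfl⟩
  · have h1 : (u + u) / 2 = u := by omega
    have h2 : (u + u + 1) / 2 = u := by omega
    simp only [pc, h1, h2]; nlinarith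
  · have h1 : (2*u + 1) / 2 = u := by omega
    have h2 : (2*u + 1 + 1) / 2 = u + 1 := by omega
    simp only [pc, h1, h2]; nlinarith

lemma pc_ge (t : ℕ) : t * t ≤ 2 * pc t + 1 := by
  rcases Nat.even_or_odd t with ⟨u, rfl⟩ | ⟨u, rfl⟩
  · have h1 : (u + u) / 2 = u := by omega
    have h2 : (u + u + 1) / 2 = u := by omega
    simp only [pc, h1, h2]; nlinarith
  · have h1 : (2*u + 1) / 2 = u := by omega
    have h2 : (2*u + 1 + 1) / 2 = u + 1 := by omega
    simp only [pc, h1, h2]; nlinarith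

lemma card_evens (t : ℕ) : ((Finset.Ioc 0 t).filter (fun n => n % 2 = 0)).card = t / 2 := by
  induction t with
  | zero => simp
  | succ t ih =>
    have h : Finset.Ioc 0 (t+1) = insert (t+1) (Finset.Ioc 0 t) := by
      ext x; simp [Finset.mem_Ioc, Finset.mem_insert]; omega
    rw [h, Finset.filter_insert]
    by_cases hp : (t+1) % 2 = 0
    · rw [if_pos hp, Finset.card_insert_of_notMem (by simp [Finset.mem_filter, Finset.mem_Ioc])]
      omega
    · rw [if_neg hp]; omega

lemma card_odds (t : ℕ) : ((Finset.Ioc 0 t).filter (fun n => n % 2 = 1)).card = (t+1) / 2 := by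
  have h := Finset.card_filter_add_card_filter_not (s := Finset.Ioc 0 t)
    (p := fun n => n % 2 = 0)
  have h2 : (Finset.Ioc 0 t).filter (fun n => ¬ n % 2 = 0)
      = (Finset.Ioc 0 t).filter (fun n => n % 2 = 1) := by
    apply Finset.filter_congr; intro x _; constructor <;> intro <;> omega
  rw [card_evens, h2, Nat.card_Ioc] at h
  omega

def A (t : ℕ) : Finset (ℕ × ℕ) :=
  (Finset.Ioc 0 t ×ˢ Finset.Ioc 0 t).filter (fun p => (p.1 + p.2) % 2 = 1)

lemma card_A (t : ℕ) : (A t).card = pc t := by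
  have h : A t = ((Finset.Ioc 0 t).filter (fun n => n % 2 = 0)) ×ˢ
      ((Finset.Ioc 0 t).filter (fun n => n % 2 = 1)) ∪
      ((Finset.Ioc 0 t).filter (fun n => n % 2 = 1)) ×ˢ
      ((Finset.Ioc 0 t).filter (fun n => n % 2 = 0)) := by
    ext p
    simp only [A, Finset.mem_filter, Finset.mem_product, Finset.mem_union, Finset.mem_Ioc]
    omega
  have hdisj : Disjoint (((Finset.Ioc 0 t).filter (fun n => n % 2 = 0)) ×ˢ
      ((Finset.Ioc 0 t).filter (fun n => n % 2 = 1)))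
      (((Finset.Ioc 0 t).filter (fun n => n % 2 = 1)) ×ˢ
      ((Finset.Ioc 0 t).filter (fun n => n % 2 = 0))) := by
    rw [Finset.disjoint_left]
    intro p hp hq
    simp only [Finset.mem_product, Finset.mem_filter] at hp hq
    omega
  rw [h, Finset.card_union_of_disjoint hdisj, Finset.card_product, Finset.card_product,
    card_evens, card_odds]
  simp only [pc]; ring

def Tset (M : ℕ) : Finset (ℕ × ℕ) := (A M).filter (fun p => Nat.gcd p.1 p.2 = 1)

lemma D_card (M d : ℕ) (hd : d % 2 = 1) :
    ((A M).filter (fun p => d ∣ p.1 ∧ d ∣ p.2)).card ≤ pc (M / d) := by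
  rw [← card_A]
  apply Finset.card_le_card_of_injOn (fun p => (p.1 / d, p.2 / d))
  · intro p hp
    simp only [Finset.mem_coe, Finset.mem_filter, A, Finset.mem_product, Finset.mem_Ioc] at hp ⊢
    obtain ⟨⟨⟨⟨hp1, hp2⟩, hp3, hp4⟩, hpar⟩, hd1, hd2⟩ := hp
    have hd0 : 0 < d := by omega
    obtain ⟨u, hu⟩ := hd1
    obtain ⟨v, hv⟩ := hd2
    have hu' : p.1 / d = u := by rw [hu, Nat.mul_div_cancel_left u hd0]
    have hv' : p.2 / d = v := by rw [hv, Nat.mul_div_cancel_left v hd0]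
    have hupos : 0 < u := by
      rcases Nat.eq_zero_or_pos u with rfl | h
      · omega
      · exact h
    have hvpos : 0 < v := by
      rcases Nat.eq_zero_or_pos v with rfl | h
      · omega
      · exact h
    rw [hu, hv, Nat.add_mod, Nat.mul_mod, Nat.mul_mod d v, hd, one_mul] at hpar
    refine ⟨⟨⟨?_, ?_⟩, ?_, ?_⟩, ?_⟩
    · omega
    · rw [hu']; exact le_trans (by omega) (Nat.div_le_div_right hp2)
    · omega
    · rw [hv']; exact le_trans (by omega) (Nat.div_le_div_right hp4)
    · rw [hu', hv']; omega
  · intro p hp q hq heq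
    simp only [Finset.mem_coe, Finset.mem_filter] at hp hq
    simp only [Prod.mk.injEq] at heq
    have h1 : p.1 = d * (p.1 / d) := (Nat.mul_div_cancel' hp.2.1).symm
    have h2 : p.2 = d * (p.2 / d) := (Nat.mul_div_cancel' hp.2.2).symm
    have h3 : q.1 = d * (q.1 / d) := (Nat.mul_div_cancel' hq.2.1).symm
    have h4 : q.2 = d * (q.2 / d) := (Nat.mul_div_cancel' hq.2.2).symm
    have e1 : p.1 = q.1 := by rw [h1, heq.1, ← h3]
    have e2 : p.2 = q.2 := by rw [h2, heq.2, ← h4]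
    exact Prod.ext e1 e2

lemma card_bound (M : ℕ) :
    (A M).card ≤ (Tset M).card + ∑ j ∈ Finset.range M, pc (M / (2*j+3)) := by
  classical
  have hsplit := Finset.card_filter_add_card_filter_not (s := A M)
    (p := fun p => Nat.gcd p.1 p.2 = 1)
  have hsub : (A M).filter (fun p => ¬ Nat.gcd p.1 p.2 = 1) ⊆
      (Finset.range M).biUnion
        (fun j => (A M).filter (fun p => (2*j+3) ∣ p.1 ∧ (2*j+3) ∣ p.2)) := by
    intro p hp
    rw [Finset.mem_filter] at hp
    obtain ⟨hpA, hg⟩ := hp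
    have hpA' := hpA
    simp only [A, Finset.mem_filter, Finset.mem_product, Finset.mem_Ioc] at hpA'
    obtain ⟨⟨⟨hp1, hp2⟩, hp3, hp4⟩, hpar⟩ := hpA'
    set g := Nat.gcd p.1 p.2 with hgdef
    have hgpos : 0 < g := Nat.gcd_pos_of_pos_left _ hp1
    have hgd1 : g ∣ p.1 := Nat.gcd_dvd_left _ _
    have hgd2 : g ∣ p.2 := Nat.gcd_dvd_right _ _
    have hgodd : g % 2 = 1 := by
      rcases Nat.mod_two_eq_zero_or_one g with h | h
      · exfalso
        have h2 : (2:ℕ) ∣ g := by omega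
        obtain ⟨u, hu⟩ := h2.trans hgd1
        obtain ⟨v, hv⟩ := h2.trans hgd2
        omega
      · exact h
    have hgle : g ≤ M := le_trans (Nat.le_of_dvd hp1 hgd1) hp2
    have hg3 : 3 ≤ g := by omega
    refine Finset.mem_biUnion.mpr ⟨(g - 3)/2, ?_, ?_⟩
    · simp only [Finset.mem_range]; omega
    · have he : 2 * ((g-3)/2) + 3 = g := by omega
      rw [Finset.mem_filter, he]
      exact ⟨hpA, hgd1, hgd2⟩
  have hbad : ((A M).filter (fun p => ¬ Nat.gcd p.1 p.2 = 1)).card ≤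
      ∑ j ∈ Finset.range M, pc (M / (2*j+3)) := by
    calc ((A M).filter (fun p => ¬ Nat.gcd p.1 p.2 = 1)).card
        ≤ ((Finset.range M).biUnion
          (fun j => (A M).filter (fun p => (2*j+3) ∣ p.1 ∧ (2*j+3) ∣ p.2))).card :=
          Finset.card_le_card hsub
      _ ≤ ∑ j ∈ Finset.range M,
          ((A M).filter (fun p => (2*j+3) ∣ p.1 ∧ (2*j+3) ∣ p.2)).card :=
          Finset.card_biUnion_le
      _ ≤ ∑ j ∈ Finset.range M, pc (M / (2*j+3)) :=
          Finset.sum_le_sum (fun j _ => D_card M (2*j+3) (by omega))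
  have hT : (Tset M).card = ((A M).filter (fun p => Nat.gcd p.1 p.2 = 1)).card := rfl
  omega

lemma term0 (M : ℕ) : (pc (M/3) : ℚ) ≤ (M:ℚ)^2 / 18 := by
  have h1 : 2 * pc (M/3) ≤ (M/3) * (M/3) := pc_le _
  have h2 : (M/3) * 3 ≤ M := Nat.div_mul_le_self M 3
  have h1q : 2 * (pc (M/3) : ℚ) ≤ ((M/3 : ℕ) : ℚ) * ((M/3 : ℕ) : ℚ) := by exact_mod_cast h1
  have h2q : ((M/3 : ℕ) : ℚ) * 3 ≤ (M : ℚ) := by exact_mod_cast h2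
  have h0 : (0:ℚ) ≤ ((M/3 : ℕ) : ℚ) := by positivity
  nlinarith [h1q, h2q, h0, mul_le_mul h2q h2q (by positivity) (by exact_mod_cast Nat.zero_le M)]

lemma termsucc (M j : ℕ) :
    (pc (M/(2*j+5)) : ℚ) ≤ (M:ℚ)^2/4 * (1/(2*(j:ℚ)+4) - 1/(2*(j:ℚ)+6)) := by
  have e : (M:ℚ)^2/4 * (1/(2*(j:ℚ)+4) - 1/(2*(j:ℚ)+6))
      = (M:ℚ)^2 / (2*(2*(j:ℚ)+4)*(2*(j:ℚ)+6)) := by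
    have h1 : (2*(j:ℚ)+4) ≠ 0 := by positivity
    have h2 : (2*(j:ℚ)+6) ≠ 0 := by positivity
    field_simp
    ring
  rw [e, le_div_iff₀ (by positivity)]
  have h1 : 2 * pc (M/(2*j+5)) ≤ (M/(2*j+5)) * (M/(2*j+5)) := pc_le _
  have h2 : (M/(2*j+5)) * (2*j+5) ≤ M := Nat.div_mul_le_self M _
  have h1q : 2 * (pc (M/(2*j+5)) : ℚ) ≤ ((M/(2*j+5) : ℕ) : ℚ) * ((M/(2*j+5) : ℕ) : ℚ) := by
    exact_mod_cast h1
  have h2q : ((M/(2*j+5) : ℕ) : ℚ) * (2*(j:ℚ)+5) ≤ (M : ℚ) := by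
    exact_mod_cast h2
  have h0 : (0:ℚ) ≤ ((M/(2*j+5) : ℕ) : ℚ) := by positivity
  have hM0 : (0:ℚ) ≤ (M:ℚ) := by positivity
  have key1 : (((M/(2*j+5) : ℕ) : ℚ) * (2*(j:ℚ)+5)) * (((M/(2*j+5) : ℕ) : ℚ) * (2*(j:ℚ)+5))
      ≤ (M:ℚ) * M := mul_le_mul h2q h2q (by positivity) hM0
  have hprod : (0:ℚ) ≤ (((M/(2*j+5) : ℕ) : ℚ) * ((M/(2*j+5) : ℕ) : ℚ)
      - 2 * (pc (M/(2*j+5)) : ℚ)) * ((2*(j:ℚ)+5) * (2*(j:ℚ)+5)) :=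
    mul_nonneg (by linarith) (by positivity)
  have hP0 : (0:ℚ) ≤ (pc (M/(2*j+5)) : ℚ) := by positivity
  nlinarith [h1q, key1, hprod, hP0]

lemma tele (n : ℕ) : ∑ j ∈ Finset.range n, ((1:ℚ)/(2*(j:ℚ)+4) - 1/(2*(j:ℚ)+6))
    = 1/4 - 1/(2*(n:ℚ)+4) := by
  induction n with
  | zero => norm_num
  | succ n ih =>
    rw [Finset.sum_range_succ, ih]
    have h1 : 2*(n:ℚ)+4 ≠ 0 := by positivity
    have h2 : 2*(n:ℚ)+6 ≠ 0 := by positivity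
    push_cast
    field_simp
    ring

lemma sum_bound (M : ℕ) (hM : 1 ≤ M) :
    (∑ j ∈ Finset.range M, (pc (M / (2*j+3)) : ℚ)) ≤ (M:ℚ)^2/18 + (M:ℚ)^2/16 := by
  obtain ⟨n, rfl⟩ : ∃ n, M = n + 1 := ⟨M-1, by omega⟩
  rw [Finset.sum_range_succ']
  have h0 : (pc ((n+1) / 3) : ℚ) ≤ ((n+1:ℕ):ℚ)^2/18 := term0 (n+1)
  have hrest : ∑ j ∈ Finset.range n, (pc ((n+1) / (2*(j+1)+3)) : ℚ)
      ≤ ((n+1:ℕ):ℚ)^2/16 := by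
    have step : ∀ j ∈ Finset.range n, (pc ((n+1) / (2*(j+1)+3)) : ℚ)
        ≤ ((n+1:ℕ):ℚ)^2/4 * ((1:ℚ)/(2*(j:ℚ)+4) - 1/(2*(j:ℚ)+6)) := by
      intro j _
      have he : 2*(j+1)+3 = 2*j+5 := by omega
      rw [he]
      exact termsucc (n+1) j
    calc ∑ j ∈ Finset.range n, (pc ((n+1) / (2*(j+1)+3)) : ℚ)
        ≤ ∑ j ∈ Finset.range n, ((n+1:ℕ):ℚ)^2/4 * ((1:ℚ)/(2*(j:ℚ)+4) - 1/(2*(j:ℚ)+6)) :=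
          Finset.sum_le_sum step
      _ = ((n+1:ℕ):ℚ)^2/4 * ∑ j ∈ Finset.range n, ((1:ℚ)/(2*(j:ℚ)+4) - 1/(2*(j:ℚ)+6)) := by
          rw [Finset.mul_sum]
      _ = ((n+1:ℕ):ℚ)^2/4 * (1/4 - 1/(2*(n:ℚ)+4)) := by rw [tele]
      _ ≤ ((n+1:ℕ):ℚ)^2/4 * (1/4) := by
          apply mul_le_mul_of_nonneg_left _ (by positivity)
          have h4 : (0:ℚ) ≤ 1/(2*(n:ℚ)+4) := by positivity
          linarith
      _ = ((n+1:ℕ):ℚ)^2/16 := by ring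
  linarith

lemma card_T (k : ℕ) (hk : 19 ≤ k) : k ≤ (Tset (Nat.sqrt (7*k/2))).card := by
  set M := Nat.sqrt (7*k/2) with hMdef
  have hM8 : 8 ≤ M := Nat.le_sqrt.mpr (by omega)
  have hM1 : 1 ≤ M := by omega
  have hsq1 : 7*k/2 < (M+1)*(M+1) := by
    have h := Nat.lt_succ_sqrt (7*k/2)
    simpa [Nat.succ_eq_add_one] using h
  have hub : 7*k ≤ 2*(M*M) + 4*M + 2 := by
    have h2 : (M+1)*(M+1) = M*M + 2*M + 1 := by ring
    rw [h2] at hsq1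
    revert hsq1
    generalize M*M = a
    intro hsq1
    omega
  -- rational chain
  have hcb := card_bound M
  have hcbq : ((A M).card : ℚ) ≤ ((Tset M).card : ℚ)
      + ∑ j ∈ Finset.range M, (pc (M / (2*j+3)) : ℚ) := by
    push_cast
    exact_mod_cast hcb
  rw [card_A] at hcbq
  have hsb := sum_bound M hM1
  have hpcg : ((M:ℚ) * M) ≤ 2 * (pc M : ℚ) + 1 := by exact_mod_cast pc_ge M
  have hubq : 7*(k:ℚ) ≤ 2*((M:ℚ)*M) + 4*(M:ℚ) + 2 := by exact_mod_cast hub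
  have hM8q : (8:ℚ) ≤ (M:ℚ) := by exact_mod_cast hM8
  have hM6 : 8*(M:ℚ) ≤ (M:ℚ)*M := by nlinarith
  have hfin : (k:ℚ) ≤ ((Tset M).card : ℚ) := by nlinarith [hcbq, hsb, hpcg, hubq, hM8q, hM6]
  exact_mod_cast hfin

/-! ### The map to triples -/

def F : ℕ × ℕ → ℕ × ℕ × ℕ := fun p =>
  if p.2 < p.1 then (p.1^2 - p.2^2, 2*(p.1*p.2), p.1^2 + p.2^2)
  else (2*(p.1*p.2), p.2^2 - p.1^2, p.1^2 + p.2^2)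

lemma sub_lemma (a b : ℕ) (h : b ≤ a) : (a - b) + (a + b) = 2*a ∧ (a+b) - (a-b) = 2*b := by
  omega

lemma rec1 (a b c d : ℕ) (hb : b ≤ a) (hd : d ≤ c) (h1 : a - b = c - d) (h2 : a + b = c + d) :
    a = c ∧ b = d := by omega

lemma pyth (m n : ℕ) (h : n ≤ m) : (m^2 - n^2)^2 + (2*(m*n))^2 = (m^2+n^2)^2 := by
  have h2 : n^2 ≤ m^2 := Nat.pow_le_pow_left h 2
  zify [h2]
  ring

lemma sq_mod_two (m : ℕ) : m^2 % 2 = m % 2 := by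
  rw [Nat.pow_mod]
  rcases Nat.mod_two_eq_zero_or_one m with h | h <;> rw [h] <;> norm_num

lemma odd_sq_diff (m n : ℕ) (hle : n ≤ m) (hpar : (m+n) % 2 = 1) : (m^2 - n^2) % 2 = 1 := by
  have h1 : (m - n) % 2 = 1 := by omega
  rw [Nat.sq_sub_sq, Nat.mul_mod, hpar, h1]

lemma odd_sq_sum (m n : ℕ) (hpar : (m+n) % 2 = 1) : (m^2 + n^2) % 2 = 1 := by
  rw [Nat.add_mod, sq_mod_two, sq_mod_two, ← Nat.add_mod, hpar]

lemma prim (m n : ℕ) (hn : 0 < n) (hlt : n < m) (hpar : (m+n) % 2 = 1)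
    (hcop : Nat.gcd m n = 1) :
    Nat.gcd (m^2-n^2) (Nat.gcd (2*(m*n)) (m^2+n^2)) = 1 := by
  have hle : n^2 ≤ m^2 := Nat.pow_le_pow_left hlt.le 2
  set x := m^2 - n^2 with hx
  set y := 2*(m*n) with hy
  set L := m^2 + n^2 with hL
  set g := Nat.gcd x (Nat.gcd y L) with hg
  have hgx : g ∣ x := Nat.gcd_dvd_left _ _
  have hgL : g ∣ L := (Nat.gcd_dvd_right x _).trans (Nat.gcd_dvd_right y L)
  have hsum : x + L = 2*m^2 := (sub_lemma (m^2) (n^2) hle).1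
  have hdiff : L - x = 2*n^2 := (sub_lemma (m^2) (n^2) hle).2
  have h2a : g ∣ 2*m^2 := by rw [← hsum]; exact dvd_add hgx hgL
  have h2b : g ∣ 2*n^2 := by rw [← hdiff]; exact Nat.dvd_sub hgL hgx
  have hcop2 : Nat.gcd (m^2) (n^2) = 1 := Nat.Coprime.pow 2 2 hcop
  have hg2 : g ∣ 2 := by
    have hd := Nat.dvd_gcd h2a h2b
    rwa [Nat.gcd_mul_left, hcop2, mul_one] at hd
  have hLodd : L % 2 = 1 := odd_sq_sum m n hpar
  rcases (Nat.dvd_prime Nat.prime_two).mp hg2 with h | h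
  · exact h
  · exfalso
    obtain ⟨c, hc⟩ := hgL
    rw [h] at hc
    omega

lemma gcd_rot (a b c : ℕ) : Nat.gcd a (Nat.gcd b c) = Nat.gcd b (Nat.gcd a c) := by
  rw [← Nat.gcd_assoc, Nat.gcd_comm a b, Nat.gcd_assoc]

lemma mem_Tset (M : ℕ) (p : ℕ × ℕ) (hp : p ∈ Tset M) :
    0 < p.1 ∧ p.1 ≤ M ∧ 0 < p.2 ∧ p.2 ≤ M ∧ (p.1 + p.2) % 2 = 1 ∧ Nat.gcd p.1 p.2 = 1 := by
  simp only [Tset, A, Finset.mem_filter, Finset.mem_product, Finset.mem_Ioc] at hp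
  tauto

lemma F_injOn (M : ℕ) : Set.InjOn F (Tset M) := by
  intro p hp q hq heq
  obtain ⟨hp1, hp2, hp3, hp4, hp5, -⟩ := mem_Tset M p (Finset.mem_coe.mp hp)
  obtain ⟨hq1, hq2, hq3, hq4, hq5, -⟩ := mem_Tset M q (Finset.mem_coe.mp hq)
  by_cases h1 : p.2 < p.1 <;> by_cases h2 : q.2 < q.1 <;>
    simp only [F, h1, h2, if_true, if_false, Prod.mk.injEq] at heq
  · -- both first branch
    obtain ⟨e1, e2, e3⟩ := heq
    have hap : p.2^2 ≤ p.1^2 := Nat.pow_le_pow_left h1.le 2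
    have haq : q.2^2 ≤ q.1^2 := Nat.pow_le_pow_left h2.le 2
    obtain ⟨f1, f2⟩ := rec1 _ _ _ _ hap haq e1 e3
    have g1 : p.1 = q.1 := Nat.pow_left_injective (by norm_num) f1
    have g2 : p.2 = q.2 := Nat.pow_left_injective (by norm_num) f2
    exact Prod.ext g1 g2
  · -- p first branch, q second: parity contradiction
    exfalso
    have hodd : (p.1^2 - p.2^2) % 2 = 1 := odd_sq_diff p.1 p.2 h1.le hp5
    rw [heq.1] at hodd
    have : (2*(q.1*q.2)) % 2 = 0 := Nat.mul_mod_right 2 _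
    omega
  · exfalso
    have hodd : (q.1^2 - q.2^2) % 2 = 1 := odd_sq_diff q.1 q.2 h2.le hq5
    rw [← heq.1] at hodd
    have : (2*(p.1*p.2)) % 2 = 0 := Nat.mul_mod_right 2 _
    omega
  · -- both second branch
    obtain ⟨e1, e2, e3⟩ := heq
    have hlt1 : p.1 ≤ p.2 := le_of_not_gt h1
    have hlt2 : q.1 ≤ q.2 := le_of_not_gt h2
    have hap : p.1^2 ≤ p.2^2 := Nat.pow_le_pow_left hlt1 2
    have haq : q.1^2 ≤ q.2^2 := Nat.pow_le_pow_left hlt2 2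
    have e3' : p.2^2 + p.1^2 = q.2^2 + q.1^2 := by omega
    obtain ⟨f1, f2⟩ := rec1 _ _ _ _ hap haq e2 e3'
    have g1 : p.2 = q.2 := Nat.pow_left_injective (by norm_num) f1
    have g2 : p.1 = q.1 := Nat.pow_left_injective (by norm_num) f2
    exact Prod.ext g2 g1


lemma F_props (M k : ℕ) (hMk : 2*(M*M) ≤ 7*k) (p : ℕ × ℕ) (hp : p ∈ Tset M) :
    0 < (F p).1 ∧ 0 < (F p).2.1 ∧ 0 < (F p).2.2 ∧
      (F p).1 ^ 2 + (F p).2.1 ^ 2 = (F p).2.2 ^ 2 ∧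
      Nat.gcd (F p).1 (Nat.gcd (F p).2.1 (F p).2.2) = 1 ∧
      (F p).1 ≤ 7 * k ∧ (F p).2.1 ≤ 7 * k ∧ (F p).2.2 ≤ 7 * k := by
  obtain ⟨hp1, hp2, hp3, hp4, hp5, hp6⟩ := mem_Tset M p hp
  have hne : p.1 ≠ p.2 := by intro h; rw [h] at hp5; omega
  have hLbound : p.1^2 + p.2^2 ≤ 7*k := by
    have b1 : p.1^2 ≤ M*M := by
      have := Nat.mul_le_mul hp2 hp2
      calc p.1^2 = p.1*p.1 := sq p.1
        _ ≤ M*M := this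
    have b2 : p.2^2 ≤ M*M := by
      have := Nat.mul_le_mul hp4 hp4
      calc p.2^2 = p.2*p.2 := sq p.2
        _ ≤ M*M := this
    omega
  have hy : 2*(p.1*p.2) ≤ p.1^2 + p.2^2 := by
    have := two_mul_le_add_sq p.1 p.2
    calc 2*(p.1*p.2) = 2*p.1*p.2 := by ring
      _ ≤ p.1^2 + p.2^2 := this
  by_cases h : p.2 < p.1 <;> simp only [F, h, if_true, if_false]
  · have hsqlt : p.2^2 < p.1^2 := Nat.pow_lt_pow_left h (by norm_num)
    refine ⟨by omega, by positivity, by positivity, pyth p.1 p.2 h.le,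
      prim p.1 p.2 hp3 h hp5 hp6, by omega, by omega, by omega⟩
  · have hlt : p.1 < p.2 := lt_of_le_of_ne (le_of_not_gt h) hne
    have hsqlt : p.1^2 < p.2^2 := Nat.pow_lt_pow_left hlt (by norm_num)
    have hpar' : (p.2 + p.1) % 2 = 1 := by omega
    have hcop' : Nat.gcd p.2 p.1 = 1 := by rw [Nat.gcd_comm]; exact hp6
    have hgcd := prim p.2 p.1 hp1 hlt hpar' hcop'
    have hpy := pyth p.2 p.1 hlt.le
    have hpy' : (2*(p.1*p.2))^2 + (p.2^2 - p.1^2)^2 = (p.2^2 + p.1^2)^2 := by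
      rw [mul_comm p.1 p.2]; omega
    have e2' : p.2^2 + p.1^2 = p.1^2 + p.2^2 := add_comm _ _
    rw [e2'] at hpy'
    refine ⟨by positivity, by omega, by positivity, hpy', ?_, by omega, by omega, by omega⟩
    rw [gcd_rot]
    have e1 : p.1 * p.2 = p.2 * p.1 := mul_comm _ _
    have e2 : p.1^2 + p.2^2 = p.2^2 + p.1^2 := add_comm _ _
    rw [e1, e2]
    exact hgcd


def L18 : List (ℕ × ℕ × ℕ) :=
  [(3,4,5),(4,3,5),(5,12,13),(12,5,13),(8,15,17),(15,8,17),(20,21,29),(21,20,29),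
   (7,24,25),(24,7,25),(9,40,41),(40,9,41),(12,35,37),(35,12,37),(28,45,53),(45,28,53),
   (11,60,61),(60,11,61)]

lemma small : ∀ k ∈ Finset.Icc 1 18, k ≤ ((L18.take k).toFinset).card ∧
    ∀ t ∈ (L18.take k).toFinset, 0 < t.1 ∧ 0 < t.2.1 ∧ 0 < t.2.2 ∧
      t.1^2 + t.2.1^2 = t.2.2^2 ∧ Nat.gcd t.1 (Nat.gcd t.2.1 t.2.2) = 1 ∧
      t.1 ≤ 7*k ∧ t.2.1 ≤ 7*k ∧ t.2.2 ≤ 7*k := by decide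


end PTLB

/-- For every `k ≥ 1`, there are at least `k` distinct primitive Pythagorean triples
all of whose entries are at most `7k`. -/
theorem primitive_triples_linear_bound (k : ℕ) (hk : 1 ≤ k) :
    ∃ S : Finset (ℕ × ℕ × ℕ), k ≤ S.card ∧
      ∀ t ∈ S, 0 < t.1 ∧ 0 < t.2.1 ∧ 0 < t.2.2 ∧
        t.1 ^ 2 + t.2.1 ^ 2 = t.2.2 ^ 2 ∧
        Nat.gcd t.1 (Nat.gcd t.2.1 t.2.2) = 1 ∧
        t.1 ≤ 7 * k ∧ t.2.1 ≤ 7 * k ∧ t.2.2 ≤ 7 * k := by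
  rcases le_or_gt k 18 with hs | hb
  · have h := PTLB.small k (Finset.mem_Icc.mpr ⟨hk, hs⟩)
    exact ⟨(PTLB.L18.take k).toFinset, h.1, h.2⟩
  · set M := Nat.sqrt (7*k/2) with hM
    have hMk : 2*(M*M) ≤ 7*k := by
      have h1 : M*M ≤ 7*k/2 := Nat.sqrt_le (7*k/2)
      revert h1; generalize M*M = a; intro h1; omega
    refine ⟨(PTLB.Tset M).image PTLB.F, ?_, ?_⟩
    · rw [Finset.card_image_of_injOn (PTLB.F_injOn M)]
      exact PTLB.card_T k (by omega)
    · intro t ht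
      obtain ⟨p, hp, rfl⟩ := Finset.mem_image.mp ht
      exact PTLB.F_props M k hMk p hp
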